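/- For a 132-avoiding permutation π = π₁ n π₂ of {1,…,n} with maximum at position k, a₄₃₂₁(π) = a₄₃₂₁(π₁) + a₄₃₂₁(π₂) + k·a₃₂₁(π₂) + a₂₁(π₁)·a₂₁(π₂) + (n-k)·a₃₂₁(π₁). -/

import Mathlib

open Finset

/-- A permutation of `{1,…,n}` (modeled on `Fin n`) is 132-avoiding if there are
no indices `i < j < l` with `π i < π l < π j`. -/
def avoids132 {n : ℕ} (π : Equiv.Perm (Fin n)) : Prop :=
  ∀ i j l : Fin n, i < j → j < l → ¬(π i < π l ∧ π l < π j)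

instance avoids132.dec {n : ℕ} : DecidablePred (avoids132 (n := n)) := fun π => by
  unfold avoids132; infer_instance

/-- A permutation is 123-avoiding if there are no indices `i < j < l` with
`π i < π j < π l`. -/
def avoids123 {n : ℕ} (π : Equiv.Perm (Fin n)) : Prop :=
  ∀ i j l : Fin n, i < j → j < l → ¬(π i < π j ∧ π j < π l)

instance avoids123.dec {n : ℕ} : DecidablePred (avoids123 (n := n)) := fun π => by
  unfold avoids123; infer_instance

/-- The finite set of 132-avoiding permutations of `{1,…,n}`. -/
def AV132 (n : ℕ) : Finset (Equiv.Perm (Fin n)) := univ.filter avoids132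

/-- The finite set of 123-avoiding permutations of `{1,…,n}`. -/
def AV123 (n : ℕ) : Finset (Equiv.Perm (Fin n)) := univ.filter avoids123

/-- number of non-inversions: pairs `i < j` with `π i < π j` (pattern 12). -/
def a12 {n : ℕ} (π : Equiv.Perm (Fin n)) : ℕ :=
  (univ.filter (fun p : Fin n × Fin n => p.1 < p.2 ∧ π p.1 < π p.2)).card

/-- number of inversions: pairs `i < j` with `π j < π i` (pattern 21). -/
def a21 {n : ℕ} (π : Equiv.Perm (Fin n)) : ℕ :=
  (univ.filter (fun p : Fin n × Fin n => p.1 < p.2 ∧ π p.2 < π p.1)).card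

/-- occurrences of pattern 123: triples `i < j < l` with `π i < π j < π l`. -/
def a123 {n : ℕ} (π : Equiv.Perm (Fin n)) : ℕ :=
  (univ.filter (fun p : Fin n × Fin n × Fin n =>
    p.1 < p.2.1 ∧ p.2.1 < p.2.2 ∧ π p.1 < π p.2.1 ∧ π p.2.1 < π p.2.2)).card

/-- occurrences of pattern 321: triples `i < j < l` with `π l < π j < π i`. -/
def a321 {n : ℕ} (π : Equiv.Perm (Fin n)) : ℕ :=
  (univ.filter (fun p : Fin n × Fin n × Fin n =>
    p.1 < p.2.1 ∧ p.2.1 < p.2.2 ∧ π p.2.2 < π p.2.1 ∧ π p.2.1 < π p.1)).card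

/-- occurrences of pattern 231: triples `i < j < l` with `π l < π i < π j`. -/
def a231 {n : ℕ} (π : Equiv.Perm (Fin n)) : ℕ :=
  (univ.filter (fun p : Fin n × Fin n × Fin n =>
    p.1 < p.2.1 ∧ p.2.1 < p.2.2 ∧ π p.2.2 < π p.1 ∧ π p.1 < π p.2.1)).card

/-- occurrences of pattern 213: triples `i < j < l` with `π j < π i < π l`. -/
def a213 {n : ℕ} (π : Equiv.Perm (Fin n)) : ℕ :=
  (univ.filter (fun p : Fin n × Fin n × Fin n =>
    p.1 < p.2.1 ∧ p.2.1 < p.2.2 ∧ π p.2.1 < π p.1 ∧ π p.1 < π p.2.2)).card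

/-- occurrences of pattern 312: triples `i < j < l` with `π j < π l < π i`. -/
def a312 {n : ℕ} (π : Equiv.Perm (Fin n)) : ℕ :=
  (univ.filter (fun p : Fin n × Fin n × Fin n =>
    p.1 < p.2.1 ∧ p.2.1 < p.2.2 ∧ π p.2.1 < π p.2.2 ∧ π p.2.2 < π p.1)).card

/-- occurrences of pattern 4321: quadruples `i < j < l < m` with
`π m < π l < π j < π i`. -/
def a4321 {n : ℕ} (π : Equiv.Perm (Fin n)) : ℕ :=
  (univ.filter (fun p : Fin n × Fin n × Fin n × Fin n =>
    p.1 < p.2.1 ∧ p.2.1 < p.2.2.1 ∧ p.2.2.1 < p.2.2.2 ∧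
    π p.2.2.2 < π p.2.2.1 ∧ π p.2.2.1 < π p.2.1 ∧ π p.2.1 < π p.1)).card

/-- inversions entirely inside the prefix strictly before position `k`. -/
def a21Pre {n : ℕ} (π : Equiv.Perm (Fin n)) (k : Fin n) : ℕ :=
  (univ.filter (fun p : Fin n × Fin n =>
    p.1 < p.2 ∧ p.2 < k ∧ π p.2 < π p.1)).card

/-- inversions entirely inside the suffix strictly after position `k`. -/
def a21Suf {n : ℕ} (π : Equiv.Perm (Fin n)) (k : Fin n) : ℕ :=
  (univ.filter (fun p : Fin n × Fin n =>
    k < p.1 ∧ p.1 < p.2 ∧ π p.2 < π p.1)).card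

/-- non-inversions entirely inside the prefix strictly before position `k`. -/
def a12Pre {n : ℕ} (π : Equiv.Perm (Fin n)) (k : Fin n) : ℕ :=
  (univ.filter (fun p : Fin n × Fin n =>
    p.1 < p.2 ∧ p.2 < k ∧ π p.1 < π p.2)).card

/-- non-inversions entirely inside the suffix strictly after position `k`. -/
def a12Suf {n : ℕ} (π : Equiv.Perm (Fin n)) (k : Fin n) : ℕ :=
  (univ.filter (fun p : Fin n × Fin n =>
    k < p.1 ∧ p.1 < p.2 ∧ π p.1 < π p.2)).card

/-- 231-occurrences entirely inside the prefix strictly before position `k`. -/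
def a231Pre {n : ℕ} (π : Equiv.Perm (Fin n)) (k : Fin n) : ℕ :=
  (univ.filter (fun p : Fin n × Fin n × Fin n =>
    p.1 < p.2.1 ∧ p.2.1 < p.2.2 ∧ p.2.2 < k ∧
    π p.2.2 < π p.1 ∧ π p.1 < π p.2.1)).card

/-- 231-occurrences entirely inside the suffix strictly after position `k`. -/
def a231Suf {n : ℕ} (π : Equiv.Perm (Fin n)) (k : Fin n) : ℕ :=
  (univ.filter (fun p : Fin n × Fin n × Fin n =>
    k < p.1 ∧ p.1 < p.2.1 ∧ p.2.1 < p.2.2 ∧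
    π p.2.2 < π p.1 ∧ π p.1 < π p.2.1)).card

/-- 321-occurrences entirely inside the prefix strictly before position `k`. -/
def a321Pre {n : ℕ} (π : Equiv.Perm (Fin n)) (k : Fin n) : ℕ :=
  (univ.filter (fun p : Fin n × Fin n × Fin n =>
    p.1 < p.2.1 ∧ p.2.1 < p.2.2 ∧ p.2.2 < k ∧
    π p.2.2 < π p.2.1 ∧ π p.2.1 < π p.1)).card

/-- 321-occurrences entirely inside the suffix strictly after position `k`. -/
def a321Suf {n : ℕ} (π : Equiv.Perm (Fin n)) (k : Fin n) : ℕ :=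
  (univ.filter (fun p : Fin n × Fin n × Fin n =>
    k < p.1 ∧ p.1 < p.2.1 ∧ p.2.1 < p.2.2 ∧
    π p.2.2 < π p.2.1 ∧ π p.2.1 < π p.1)).card

/-- 4321-occurrences entirely inside the prefix strictly before position `k`. -/
def a4321Pre {n : ℕ} (π : Equiv.Perm (Fin n)) (k : Fin n) : ℕ :=
  (univ.filter (fun p : Fin n × Fin n × Fin n × Fin n =>
    p.1 < p.2.1 ∧ p.2.1 < p.2.2.1 ∧ p.2.2.1 < p.2.2.2 ∧ p.2.2.2 < k ∧
    π p.2.2.2 < π p.2.2.1 ∧ π p.2.2.1 < π p.2.1 ∧ π p.2.1 < π p.1)).card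

/-- 4321-occurrences entirely inside the suffix strictly after position `k`. -/
def a4321Suf {n : ℕ} (π : Equiv.Perm (Fin n)) (k : Fin n) : ℕ :=
  (univ.filter (fun p : Fin n × Fin n × Fin n × Fin n =>
    k < p.1 ∧ p.1 < p.2.1 ∧ p.2.1 < p.2.2.1 ∧ p.2.2.1 < p.2.2.2 ∧
    π p.2.2.2 < π p.2.2.1 ∧ π p.2.2.1 < π p.2.1 ∧ π p.2.1 < π p.1)).card


private lemma filter_split' {α : Type*} [Fintype α] (Q c : α → Prop)
    [DecidablePred Q] [DecidablePred c] :
    (univ.filter Q).card =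
      (univ.filter fun p => Q p ∧ c p).card + (univ.filter fun p => Q p ∧ ¬ c p).card := by
  rw [← Finset.card_filter_add_card_filter_not (s := univ.filter Q) c,
    Finset.filter_filter, Finset.filter_filter]

private lemma max_lt' {n : ℕ} {π : Equiv.Perm (Fin n)} {k m : Fin n}
    (hmax : ∀ m : Fin n, π m ≤ π k) (hm : m ≠ k) : π m < π k :=
  lt_of_le_of_ne (hmax m) (fun e => hm (π.injective e))

private lemma cross' {n : ℕ} {π : Equiv.Perm (Fin n)} (hav : avoids132 π) {k : Fin n}
    (hmax : ∀ m : Fin n, π m ≤ π k) {i j : Fin n} (hi : i < k) (hj : k < j) : π j < π i := by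
  have h := hav i k j hi hj
  have h1 : π j < π k := max_lt' hmax hj.ne'
  have hne : π i ≠ π j := fun e => absurd (π.injective e) (hi.trans hj).ne
  rcases hne.lt_or_gt with h2 | h2
  · exact absurd ⟨h2, h1⟩ h
  · exact h2

/-- For a 132-avoiding permutation with maximum at 0-based position `k`
(1-based `k+1`): `a4321(π) = a4321(π₁) + a4321(π₂) + k·a321(π₂)
+ a21(π₁)·a21(π₂) + (n-k)·a321(π₁)` with the paper's 1-based `k`. -/
theorem a4321_decomposition {n : ℕ} (π : Equiv.Perm (Fin n))
    (hav : avoids132 π) (k : Fin n) (hmax : ∀ m : Fin n, π m ≤ π k) :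
    a4321 π = a4321Pre π k + a4321Suf π k
      + (k.val + 1) * a321Suf π k
      + a21Pre π k * a21Suf π k
      + (n - (k.val + 1)) * a321Pre π k := by
  classical
  have hcr : ∀ {i j : Fin n}, i < k → k < j → π j < π i := fun hi hj => cross' hav hmax hi hj
  have hml : ∀ {m : Fin n}, m ≠ k → π m < π k := fun hm => max_lt' hmax hm
  set PP : Fin n × Fin n × Fin n × Fin n → Prop := fun p =>
    p.1 < p.2.1 ∧ p.2.1 < p.2.2.1 ∧ p.2.2.1 < p.2.2.2 ∧
    π p.2.2.2 < π p.2.2.1 ∧ π p.2.2.1 < π p.2.1 ∧ π p.2.1 < π p.1 with hPP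
  have s0 : a4321 π = (univ.filter fun p => PP p ∧ k < p.1).card
      + (univ.filter fun p => PP p ∧ ¬ k < p.1).card := by
    rw [a4321]; exact filter_split' PP (fun p => k < p.1)
  have s1 := filter_split' (fun p => PP p ∧ ¬ k < p.1) (fun p => k < p.2.1)
  have s2 := filter_split' (fun p => (PP p ∧ ¬ k < p.1) ∧ ¬ k < p.2.1) (fun p => k < p.2.2.1)
  have s3 := filter_split' (fun p => ((PP p ∧ ¬ k < p.1) ∧ ¬ k < p.2.1) ∧ ¬ k < p.2.2.1)
      (fun p => k < p.2.2.2)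
  -- Piece A : all in suffix
  have hA : (univ.filter fun p => PP p ∧ k < p.1).card = a4321Suf π k := by
    rw [a4321Suf]; congr 1; ext ⟨i, j, l, m⟩
    simp only [hPP, mem_filter, mem_univ, true_and]
    tauto
  -- Piece B : i ≤ k < j
  have hB : (univ.filter fun p => (PP p ∧ ¬ k < p.1) ∧ k < p.2.1).card
      = (k.val + 1) * a321Suf π k := by
    have he : (univ.filter fun p => (PP p ∧ ¬ k < p.1) ∧ k < p.2.1)
        = Iic k ×ˢ (univ.filter fun p : Fin n × Fin n × Fin n =>
            k < p.1 ∧ p.1 < p.2.1 ∧ p.2.1 < p.2.2 ∧ π p.2.2 < π p.2.1 ∧ π p.2.1 < π p.1) := by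
      ext ⟨i, j, l, m⟩
      simp only [hPP, mem_filter, mem_univ, true_and, mem_product, mem_Iic, not_lt]
      constructor
      · rintro ⟨⟨⟨h1, h2, h3, h4, h5, h6⟩, hi⟩, hj⟩
        exact ⟨hi, hj, h2, h3, h4, h5⟩
      · rintro ⟨hi, hj, h2, h3, h4, h5⟩
        have h6 : π j < π i := by
          rcases lt_or_eq_of_le hi with h | h
          · exact hcr h hj
          · subst h; exact hml hj.ne'
        exact ⟨⟨⟨lt_of_le_of_lt hi hj, h2, h3, h4, h5, h6⟩, hi⟩, hj⟩
    rw [he, Finset.card_product, Fin.card_Iic, a321Suf]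
  -- Piece C : j ≤ k < l
  have hC : (univ.filter fun p => ((PP p ∧ ¬ k < p.1) ∧ ¬ k < p.2.1) ∧ k < p.2.2.1).card
      = a21Pre π k * a21Suf π k := by
    rw [a21Pre, a21Suf, ← Finset.card_product]
    apply Finset.card_nbij' (i := fun p => ((p.1, p.2.1), (p.2.2.1, p.2.2.2)))
      (j := fun q => (q.1.1, q.1.2, q.2.1, q.2.2))
    · rintro ⟨i, j, l, m⟩ h
      simp only [Finset.mem_coe, hPP, mem_filter, mem_univ, true_and, mem_product, not_lt] at h ⊢
      obtain ⟨⟨⟨⟨h1, h2, h3, h4, h5, h6⟩, hi⟩, hj⟩, hl⟩ := h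
      have hjk : j < k := lt_of_le_of_ne hj
        (fun e => absurd (hmax i) (not_le.2 (by rw [← e]; exact h6)))
      exact ⟨⟨h1, hjk, h6⟩, hl, h3, h4⟩
    · rintro ⟨⟨i, j⟩, ⟨l, m⟩⟩ h
      simp only [Finset.mem_coe, hPP, mem_filter, mem_univ, true_and, mem_product, not_lt] at h ⊢
      obtain ⟨⟨h1, hjk, h6⟩, hl, h3, h4⟩ := h
      have h5 : π l < π j := hcr hjk hl
      exact ⟨⟨⟨⟨h1, hjk.trans hl, h3, h4, h5, h6⟩, (h1.trans hjk).le⟩, hjk.le⟩, hl⟩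
    · rintro ⟨i, j, l, m⟩ _; rfl
    · rintro ⟨⟨i, j⟩, ⟨l, m⟩⟩ _; rfl
  -- Piece D : l ≤ k < m
  have hD : (univ.filter fun p =>
        (((PP p ∧ ¬ k < p.1) ∧ ¬ k < p.2.1) ∧ ¬ k < p.2.2.1) ∧ k < p.2.2.2).card
      = (n - (k.val + 1)) * a321Pre π k := by
    have hcard : (n - (k.val + 1)) * a321Pre π k = a321Pre π k * (Ioi k).card := by
      rw [Fin.card_Ioi, mul_comm]
      congr 1
      omega
    rw [hcard, a321Pre, ← Finset.card_product]
    apply Finset.card_nbij' (i := fun p => ((p.1, p.2.1, p.2.2.1), p.2.2.2))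
      (j := fun q => (q.1.1, q.1.2.1, q.1.2.2, q.2))
    · rintro ⟨i, j, l, m⟩ h
      simp only [Finset.mem_coe, hPP, mem_filter, mem_univ, true_and, mem_product, mem_Ioi, not_lt] at h ⊢
      obtain ⟨⟨⟨⟨⟨h1, h2, h3, h4, h5, h6⟩, hi⟩, hj⟩, hl⟩, hm⟩ := h
      have hlk : l < k := lt_of_le_of_ne hl
        (fun e => absurd (hmax i) (not_le.2 (by rw [← e]; exact h5.trans h6)))
      exact ⟨⟨h1, h2, hlk, h5, h6⟩, hm⟩
    · rintro ⟨⟨i, j, l⟩, m⟩ h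
      simp only [Finset.mem_coe, hPP, mem_filter, mem_univ, true_and, mem_product, mem_Ioi, not_lt] at h ⊢
      obtain ⟨⟨h1, h2, hlk, h5, h6⟩, hm⟩ := h
      have h4 : π m < π l := hcr hlk hm
      exact ⟨⟨⟨⟨⟨h1, h2, hlk.trans hm, h4, h5, h6⟩,
        (h1.trans (h2.trans hlk)).le⟩, (h2.trans hlk).le⟩, hlk.le⟩, hm⟩
    · rintro ⟨i, j, l, m⟩ _; rfl
    · rintro ⟨⟨i, j, l⟩, m⟩ _; rfl
  -- Piece E : all in prefix
  have hE : (univ.filter fun p =>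
        (((PP p ∧ ¬ k < p.1) ∧ ¬ k < p.2.1) ∧ ¬ k < p.2.2.1) ∧ ¬ k < p.2.2.2).card
      = a4321Pre π k := by
    rw [a4321Pre]; congr 1; ext ⟨i, j, l, m⟩
    simp only [hPP, mem_filter, mem_univ, true_and, not_lt]
    constructor
    · rintro ⟨⟨⟨⟨⟨h1, h2, h3, h4, h5, h6⟩, _⟩, _⟩, _⟩, hm⟩
      have hmk : m < k := lt_of_le_of_ne hm
        (fun e => absurd (hmax i) (not_le.2 (by rw [← e]; exact h4.trans (h5.trans h6))))
      exact ⟨h1, h2, h3, hmk, h4, h5, h6⟩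
    · rintro ⟨h1, h2, h3, hmk, h4, h5, h6⟩
      exact ⟨⟨⟨⟨⟨h1, h2, h3, h4, h5, h6⟩, (h1.trans (h2.trans (h3.trans hmk))).le⟩,
        (h2.trans (h3.trans hmk)).le⟩, (h3.trans hmk).le⟩, hmk.le⟩
  rw [s0, s1, s2, s3, hA, hB, hC, hD, hE]
  ring
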